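/- Let S ∈ ℝ^{m×n}, x_0 ∈ ℝ^d, and define the PCG iteration: r_0 = b − Hx_0, r̃_0 = H_S⁻¹r_0, p_0 = r̃_0, δ̃_0 = r_0ᵀr̃_0; and for t ≥ 0, α_t = δ̃_t/(p_tᵀHp_t), x_{t+1} = x_t + α_t p_t, r_{t+1} = r_t − α_t H p_t, r̃_{t+1} = H_S⁻¹r_{t+1}, δ̃_{t+1} = r_{t+1}ᵀr̃_{t+1}, p_{t+1} = r̃_{t+1} + (δ̃_{t+1}/δ̃_t) p_t. Fix T ≥ 1 and assume δ̃_s ≠ 0 and p_sᵀHp_s ≠ 0 for all s < T (so the iteration is well-defined up to time T). Then for all t ≤ T: (i) x_t − x_0 ∈ H_S⁻¹ · span{∇f(x_0), …, ∇f(x_{t−1})}; and (ii) δ_{x_t} equals (1/2) · min over real polynomials Q of degree at most t with Q(0)=1 of Σ_{i=1}^d Q(1/λ_i)² ξ_i², where C_S = Σ_i λ_i v_i v_iᵀ is an eigenvalue decomposition of C_S and ξ_i = ⟨v_i, H^{1/2}(x_0 − x*)⟩. -/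

import Mathlib

open Matrix MeasureTheory ProbabilityTheory Real Polynomial
open scoped Classical

noncomputable section

/-- Spectral (operator) norm of a real matrix, via its action on Euclidean space. -/
def spectralNorm' {k l : ℕ} (M : Matrix (Fin k) (Fin l) ℝ) : ℝ :=
  ‖LinearMap.toContinuousLinearMap (Matrix.toEuclideanLin M)‖

/-- Positive semidefinite square root of a matrix (junk value `0` if `M` is not
positive semidefinite). -/
def msqrt {d : ℕ} (M : Matrix (Fin d) (Fin d) ℝ) : Matrix (Fin d) (Fin d) ℝ :=
  if h : M.PosSemidef then
    (h.1.eigenvectorUnitary : Matrix (Fin d) (Fin d) ℝ) *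
      diagonal ((↑) ∘ (Real.sqrt ·) ∘ h.1.eigenvalues) *
      (star h.1.eigenvectorUnitary : Matrix (Fin d) (Fin d) ℝ) else 0

/-- The Hessian `H = Aᵀ A + ν² Λ`. -/
def Hmat {n d : ℕ} (A : Matrix (Fin n) (Fin d) ℝ) (ν : ℝ)
    (Λ : Matrix (Fin d) (Fin d) ℝ) : Matrix (Fin d) (Fin d) ℝ :=
  Aᵀ * A + ν ^ 2 • Λ

/-- The sketched Hessian `H_S = Aᵀ Sᵀ S A + ν² Λ`. -/
def HSmat {n d m : ℕ} (A : Matrix (Fin n) (Fin d) ℝ) (ν : ℝ)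
    (Λ : Matrix (Fin d) (Fin d) ℝ) (S : Matrix (Fin m) (Fin n) ℝ) :
    Matrix (Fin d) (Fin d) ℝ :=
  Aᵀ * Sᵀ * S * A + ν ^ 2 • Λ

/-- `C_S = H^{-1/2} H_S H^{-1/2}`. -/
def CSmat {n d m : ℕ} (A : Matrix (Fin n) (Fin d) ℝ) (ν : ℝ)
    (Λ : Matrix (Fin d) (Fin d) ℝ) (S : Matrix (Fin m) (Fin n) ℝ) :
    Matrix (Fin d) (Fin d) ℝ :=
  (msqrt (Hmat A ν Λ))⁻¹ * HSmat A ν Λ S * (msqrt (Hmat A ν Λ))⁻¹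

/-- The minimizer `x* = H⁻¹ b`. -/
def xstar {n d : ℕ} (A : Matrix (Fin n) (Fin d) ℝ) (ν : ℝ)
    (Λ : Matrix (Fin d) (Fin d) ℝ) (b : Fin d → ℝ) : Fin d → ℝ :=
  (Hmat A ν Λ)⁻¹.mulVec b

/-- The gradient `∇f(x) = H x - b`. -/
def gradf {n d : ℕ} (A : Matrix (Fin n) (Fin d) ℝ) (ν : ℝ)
    (Λ : Matrix (Fin d) (Fin d) ℝ) (b : Fin d → ℝ) (x : Fin d → ℝ) : Fin d → ℝ :=
  (Hmat A ν Λ).mulVec x - b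

/-- The exact error `δ_x = (1/2)(x - x*)ᵀ H (x - x*)`. -/
def deltaEx {n d : ℕ} (A : Matrix (Fin n) (Fin d) ℝ) (ν : ℝ)
    (Λ : Matrix (Fin d) (Fin d) ℝ) (b : Fin d → ℝ) (x : Fin d → ℝ) : ℝ :=
  (1 / 2) * ((x - xstar A ν Λ b) ⬝ᵥ (Hmat A ν Λ).mulVec (x - xstar A ν Λ b))

/-- The approximate Newton decrement `δ̃_x = (1/2) ∇f(x)ᵀ H_S⁻¹ ∇f(x)`. -/
def deltaApx {n d m : ℕ} (A : Matrix (Fin n) (Fin d) ℝ) (ν : ℝ)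
    (Λ : Matrix (Fin d) (Fin d) ℝ) (b : Fin d → ℝ)
    (S : Matrix (Fin m) (Fin n) ℝ) (x : Fin d → ℝ) : ℝ :=
  (1 / 2) * (gradf A ν Λ b x ⬝ᵥ (HSmat A ν Λ S)⁻¹.mulVec (gradf A ν Λ b x))

namespace CGaux
variable {d : ℕ}

lemma vmv_mul_vmv (a b c e : Fin d → ℝ) :
    vecMulVec a b * vecMulVec c e = (b ⬝ᵥ c) • vecMulVec a e := by
  ext i j
  simp only [Matrix.mul_apply, vecMulVec_apply, Matrix.smul_apply, dotProduct, smul_eq_mul,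
    Finset.sum_mul, Finset.mul_sum]
  apply Finset.sum_congr rfl; intro k _; ring

lemma vmv_mulVec (a b u : Fin d → ℝ) : vecMulVec a b *ᵥ u = (b ⬝ᵥ u) • a := by
  ext i
  simp only [Matrix.mulVec, vecMulVec_apply, dotProduct, Pi.smul_apply, smul_eq_mul,
    Finset.sum_mul, Finset.mul_sum]
  apply Finset.sum_congr rfl; intro k _; ring

lemma sum_vmv_eq_one (v : Fin d → Fin d → ℝ)
    (hortho : ∀ i j, v i ⬝ᵥ v j = if i = j then (1 : ℝ) else 0) :
    ∑ i, vecMulVec (v i) (v i) = 1 := by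
  have hVV : (Matrix.of v) * (Matrix.of v)ᵀ = 1 := by
    ext i j
    simpa [Matrix.mul_apply, dotProduct, Matrix.one_apply] using hortho i j
  have h2 : (Matrix.of v)ᵀ * (Matrix.of v) = 1 := mul_eq_one_comm.mp hVV
  ext a b
  rw [← h2]
  simp [Matrix.mul_apply, Matrix.sum_apply, vecMulVec_apply]

end CGaux

namespace CGaux
variable {d : ℕ}

lemma pow_sum_vmv (c : Fin d → ℝ) (v : Fin d → Fin d → ℝ)
    (hortho : ∀ i j, v i ⬝ᵥ v j = if i = j then (1 : ℝ) else 0) (k : ℕ) :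
    (∑ i, c i • vecMulVec (v i) (v i)) ^ k = ∑ i, (c i) ^ k • vecMulVec (v i) (v i) := by
  induction k with
  | zero => simp [sum_vmv_eq_one v hortho]
  | succ k ih =>
    rw [pow_succ, ih, Finset.sum_mul_sum]
    rw [Finset.sum_comm]
    apply Finset.sum_congr rfl; intro j _
    rw [Finset.sum_eq_single j]
    · rw [smul_mul_assoc, mul_smul_comm, vmv_mul_vmv, hortho j j, if_pos rfl, one_smul,
        smul_smul, ← pow_succ]
    · intro i _ hij
      rw [smul_mul_assoc, mul_smul_comm, vmv_mul_vmv, hortho i j, if_neg hij, zero_smul,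
        smul_zero, smul_zero]
    · intro h; exact absurd (Finset.mem_univ j) h

lemma aeval_sum_vmv (c : Fin d → ℝ) (v : Fin d → Fin d → ℝ)
    (hortho : ∀ i j, v i ⬝ᵥ v j = if i = j then (1 : ℝ) else 0) (Q : Polynomial ℝ) :
    aeval (∑ i, c i • vecMulVec (v i) (v i)) Q
      = ∑ i, (Q.eval (c i)) • vecMulVec (v i) (v i) := by
  rw [Polynomial.aeval_eq_sum_range]
  have : ∀ k : ℕ, Q.coeff k • (∑ i, c i • vecMulVec (v i) (v i)) ^ k
      = ∑ i, (Q.coeff k * c i ^ k) • vecMulVec (v i) (v i) := by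
    intro k; rw [pow_sum_vmv c v hortho, Finset.smul_sum]
    exact Finset.sum_congr rfl fun i _ => by rw [smul_smul]
  simp_rw [this]
  rw [Finset.sum_comm]
  apply Finset.sum_congr rfl; intro i _
  rw [Polynomial.eval_eq_sum_range, Finset.sum_smul]

end CGaux

namespace CGaux
variable {d : ℕ}

lemma dot_symm (M : Matrix (Fin d) (Fin d) ℝ) (hM : Mᵀ = M) (u v : Fin d → ℝ) :
    u ⬝ᵥ M *ᵥ v = M *ᵥ u ⬝ᵥ v := by
  rw [Matrix.dotProduct_mulVec, ← Matrix.mulVec_transpose, hM]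

lemma sum_mulVec {ι : Type*} (F : Finset ι) (f : ι → Matrix (Fin d) (Fin d) ℝ)
    (z : Fin d → ℝ) : (∑ i ∈ F, f i) *ᵥ z = ∑ i ∈ F, f i *ᵥ z := by
  classical
  induction F using Finset.induction_on with
  | empty => simp [Matrix.zero_mulVec]
  | insert _ _ hnot ih =>
    rw [Finset.sum_insert hnot, Finset.sum_insert hnot, Matrix.add_mulVec, ih]

lemma aeval_comm (M : Matrix (Fin d) (Fin d) ℝ) (q : Polynomial ℝ) :
    M * aeval M q = aeval M q * M := by
  have h1 : aeval M (X * q) = M * aeval M q := by rw [_root_.map_mul, Polynomial.aeval_X]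
  have h2 : aeval M (q * X) = aeval M q * M := by rw [_root_.map_mul, Polynomial.aeval_X]
  rw [← h1, ← h2, mul_comm q X]

structure CGData (d : ℕ) where
  H : Matrix (Fin d) (Fin d) ℝ
  P : Matrix (Fin d) (Fin d) ℝ
  hHsym : Hᵀ = H
  hHpsd : H.PosSemidef
  hPsym : Pᵀ = P
  x : ℕ → Fin d → ℝ
  r : ℕ → Fin d → ℝ
  p : ℕ → Fin d → ℝ
  dt : ℕ → ℝ
  al : ℕ → ℝ
  xs : Fin d → ℝ
  hr : ∀ t, r t = H *ᵥ (xs - x t)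
  hdt : ∀ t, dt t = r t ⬝ᵥ (P *ᵥ r t)
  hal : ∀ t, al t = dt t / (p t ⬝ᵥ (H *ᵥ p t))
  hp0 : p 0 = P *ᵥ r 0
  hprec : ∀ t, p (t + 1) = P *ᵥ r (t + 1) + (dt (t + 1) / dt t) • p t
  hxrec : ∀ t, x (t + 1) = x t + al t • p t
  T : ℕ
  hwell : ∀ s < T, dt s ≠ 0 ∧ p s ⬝ᵥ (H *ᵥ p s) ≠ 0

namespace CGData
variable (s : CGData d)

lemma rrec (t : ℕ) : s.r (t + 1) = s.r t - s.al t • (s.H *ᵥ s.p t) := by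
  rw [s.hr, s.hr, s.hxrec]
  rw [show s.xs - (s.x t + s.al t • s.p t) = (s.xs - s.x t) - s.al t • s.p t by abel]
  rw [Matrix.mulVec_sub, Matrix.mulVec_smul]

lemma al_ne_zero {t : ℕ} (ht : t < s.T) : s.al t ≠ 0 := by
  have h := s.hwell t ht
  rw [s.hal]
  exact div_ne_zero h.1 h.2

lemma Hp_eq {t : ℕ} (ht : t < s.T) :
    s.H *ᵥ s.p t = (s.al t)⁻¹ • (s.r t - s.r (t + 1)) := by
  rw [s.rrec t]
  rw [show s.r t - (s.r t - s.al t • (s.H *ᵥ s.p t)) = s.al t • (s.H *ᵥ s.p t) by abel]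
  rw [smul_smul, inv_mul_cancel₀ (s.al_ne_zero ht), one_smul]

theorem orth : ∀ t ≤ s.T, ∀ j < t,
    s.r t ⬝ᵥ (s.P *ᵥ s.r j) = 0 ∧ s.p t ⬝ᵥ (s.H *ᵥ s.p j) = 0 ∧ s.r t ⬝ᵥ s.p j = 0 := by
  intro t
  induction t with
  | zero => intro _ j hj; exact absurd hj (Nat.not_lt_zero j)
  | succ t ih =>
    intro hT
    have htT : t < s.T := hT
    have hdt0 := (s.hwell t htT).1
    have hpHp0 := (s.hwell t htT).2
    have ih' := ih (le_of_lt htT)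
    -- r t ⬝ p t = dt t
    have hrp : s.r t ⬝ᵥ s.p t = s.dt t := by
      cases t with
      | zero => rw [s.hp0, s.hdt]
      | succ k =>
        rw [s.hprec k, dotProduct_add, dotProduct_smul,
          (ih' k (lt_add_one k)).2.2, smul_zero, add_zero, s.hdt]
    -- (iii) at t+1
    have h3 : ∀ j ≤ t, s.r (t + 1) ⬝ᵥ s.p j = 0 := by
      intro j hj
      rw [s.rrec t, sub_dotProduct, smul_dotProduct,
        ← dot_symm s.H s.hHsym (s.p t) (s.p j)]
      rcases lt_or_eq_of_le hj with hlt | heq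
      · rw [(ih' j hlt).2.2, (ih' j hlt).2.1, smul_zero, sub_zero]
      · subst heq
        rw [hrp, s.hal, smul_eq_mul, div_mul_cancel₀ _ hpHp0, sub_self]
    -- (i) at t+1
    have h1 : ∀ j ≤ t, s.r (t + 1) ⬝ᵥ (s.P *ᵥ s.r j) = 0 := by
      intro j hj
      cases j with
      | zero => rw [← s.hp0]; exact h3 0 (Nat.zero_le t)
      | succ k =>
        have hk : s.P *ᵥ s.r (k + 1) = s.p (k + 1) - (s.dt (k + 1) / s.dt k) • s.p k := by
          rw [s.hprec k]; abel
        rw [hk, dotProduct_sub, dotProduct_smul, h3 (k + 1) hj,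
          h3 k (le_of_lt hj), smul_zero, sub_zero]
    -- (ii) at t+1
    have h2 : ∀ j ≤ t, s.p (t + 1) ⬝ᵥ (s.H *ᵥ s.p j) = 0 := by
      intro j hj
      have hjT : j < s.T := lt_of_le_of_lt hj htT
      have e1 : s.r (t + 1) ⬝ᵥ (s.P *ᵥ (s.H *ᵥ s.p j))
          = (s.al j)⁻¹ * (s.r (t + 1) ⬝ᵥ (s.P *ᵥ s.r j) - s.r (t + 1) ⬝ᵥ (s.P *ᵥ s.r (j + 1))) := by
        rw [s.Hp_eq hjT, Matrix.mulVec_smul, Matrix.mulVec_sub, dotProduct_smul,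
          dotProduct_sub, smul_eq_mul]
      rw [s.hprec t, add_dotProduct, smul_dotProduct,
        ← dot_symm s.P s.hPsym (s.r (t + 1)) (s.H *ᵥ s.p j), e1]
      rcases lt_or_eq_of_le hj with hlt | heq
      · rw [h1 j (le_of_lt hlt), h1 (j + 1) hlt, (ih' j hlt).2.1, sub_self, mul_zero,
          smul_zero, add_zero]
      · subst heq
        rw [h1 j (le_refl j), ← s.hdt, s.hal, smul_eq_mul]
        field_simp
        ring
    intro j hj
    have hj' : j ≤ t := Nat.lt_succ_iff.mp hj
    exact ⟨h1 j hj', h2 j hj', h3 j hj'⟩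

/-- Krylov space spanned by the first `t` search directions. -/
def K (t : ℕ) : Submodule ℝ (Fin d → ℝ) := Submodule.span ℝ {w | ∃ j < t, w = s.p j}

lemma p_mem_K {j t : ℕ} (hj : j < t) : s.p j ∈ s.K t :=
  Submodule.subset_span ⟨j, hj, rfl⟩

lemma K_mono {t t' : ℕ} (h : t ≤ t') : s.K t ≤ s.K t' :=
  Submodule.span_mono (fun w ⟨j, hj, hw⟩ => ⟨j, lt_of_lt_of_le hj h, hw⟩)

lemma x_sub_mem (t : ℕ) : s.x t - s.x 0 ∈ s.K t := by
  induction t with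
  | zero => simp
  | succ t ih =>
    rw [s.hxrec t, show s.x t + s.al t • s.p t - s.x 0 = (s.x t - s.x 0) + s.al t • s.p t by abel]
    exact Submodule.add_mem _ (s.K_mono (Nat.le_succ t) ih)
      (Submodule.smul_mem _ _ (s.p_mem_K (lt_add_one t)))

lemma r_orth_K {t : ℕ} (ht : t ≤ s.T) : ∀ w ∈ s.K t, s.r t ⬝ᵥ w = 0 := by
  intro w hw
  induction hw using Submodule.span_induction with
  | mem w hw => obtain ⟨j, hj, rfl⟩ := hw; exact (s.orth t ht j hj).2.2
  | zero => simp
  | add u v _ _ hu hv => rw [dotProduct_add, hu, hv, add_zero]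
  | smul c u _ hu => rw [dotProduct_smul, hu, smul_zero]

lemma Pr_mem_K {j : ℕ} : s.P *ᵥ s.r j ∈ s.K (j + 1) := by
  cases j with
  | zero => rw [← s.hp0]; exact s.p_mem_K (lt_add_one 0)
  | succ k =>
    have : s.P *ᵥ s.r (k + 1) = s.p (k + 1) - (s.dt (k + 1) / s.dt k) • s.p k := by
      rw [s.hprec k]; abel
    rw [this]
    exact Submodule.sub_mem _ (s.p_mem_K (lt_add_one _))
      (Submodule.smul_mem _ _ (s.p_mem_K (by omega)))

lemma pow_mem_K {i : ℕ} (hi : i < s.T) :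
    ((s.P * s.H) ^ i) *ᵥ (s.P *ᵥ s.r 0) ∈ s.K (i + 1) := by
  induction i with
  | zero => rw [pow_zero, Matrix.one_mulVec]; exact s.Pr_mem_K
  | succ i ih =>
    rw [pow_succ', ← Matrix.mulVec_mulVec]
    have hmem := ih (lt_of_le_of_lt (Nat.le_succ i) hi)
    -- image of K (i+1) under (P*H) lies in K (i+2)
    have key : ∀ w ∈ s.K (i + 1), (s.P * s.H) *ᵥ w ∈ s.K (i + 2) := by
      intro w hw
      induction hw using Submodule.span_induction with
      | mem w hw =>
        obtain ⟨j, hj, rfl⟩ := hw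
        have hjT : j < s.T := by omega
        rw [← Matrix.mulVec_mulVec, s.Hp_eq hjT, Matrix.mulVec_smul, Matrix.mulVec_sub]
        apply Submodule.smul_mem
        exact Submodule.sub_mem _ (s.K_mono (by omega) s.Pr_mem_K)
          (s.K_mono (by omega) s.Pr_mem_K)
      | zero => rw [Matrix.mulVec_zero]; exact Submodule.zero_mem _
      | add u v _ _ hu hv => rw [Matrix.mulVec_add]; exact Submodule.add_mem _ hu hv
      | smul c u _ hu => rw [Matrix.mulVec_smul]; exact Submodule.smul_mem _ _ hu
    exact key _ hmem

lemma poly_mem_K {t : ℕ} (ht : t ≤ s.T) (g : Polynomial ℝ) (hg : g.natDegree < t) :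
    (aeval (s.P * s.H) g) *ᵥ (s.P *ᵥ s.r 0) ∈ s.K t := by
  rw [Polynomial.aeval_eq_sum_range, sum_mulVec]
  apply Submodule.sum_mem
  intro i hi
  rw [Finset.mem_range] at hi
  have hit : i < t := by omega
  rw [Matrix.smul_mulVec]
  exact Submodule.smul_mem _ _ (s.K_mono hit (s.pow_mem_K (lt_of_lt_of_le hit ht)))

lemma Pr0_eq : s.P *ᵥ s.r 0 = -((s.P * s.H) *ᵥ (s.x 0 - s.xs)) := by
  rw [s.hr 0, Matrix.mulVec_mulVec, ← Matrix.mulVec_neg]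
  congr 1
  abel

lemma Pr_eq_M (t : ℕ) (q : Polynomial ℝ)
    (hq : s.x t - s.xs = (aeval (s.P * s.H) q) *ᵥ (s.x 0 - s.xs)) :
    s.P *ᵥ s.r t = (aeval (s.P * s.H) q) *ᵥ (s.P *ᵥ s.r 0) := by
  have h1 : s.P *ᵥ s.r t = -((s.P * s.H) *ᵥ (s.x t - s.xs)) := by
    rw [s.hr t, Matrix.mulVec_mulVec, ← Matrix.mulVec_neg]
    congr 1
    abel
  rw [h1, hq, Matrix.mulVec_mulVec, s.Pr0_eq, Matrix.mulVec_neg, Matrix.mulVec_mulVec,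
    ← Matrix.neg_mulVec, ← Matrix.neg_mulVec, aeval_comm]

/-- Polynomial representation of the iterates and directions. -/
lemma rep : ∀ t, ∃ q u : Polynomial ℝ, q.natDegree ≤ t ∧ u.natDegree ≤ t ∧ q.eval 0 = 1 ∧
    s.x t - s.xs = (aeval (s.P * s.H) q) *ᵥ (s.x 0 - s.xs) ∧
    s.p t = (aeval (s.P * s.H) u) *ᵥ (s.P *ᵥ s.r 0) := by
  intro t
  induction t with
  | zero =>
    exact ⟨1, 1, by simp, by simp, by simp, by simp [Matrix.one_mulVec],
      by simp [Matrix.one_mulVec, s.hp0]⟩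
  | succ t ih =>
    obtain ⟨q, u, hqd, hud, hq0, hqx, hup⟩ := ih
    set M := s.P * s.H with hM
    set z := s.P *ᵥ s.r 0 with hz
    set q1 : Polynomial ℝ := q - C (s.al t) * (X * u) with hq1
    have hq1d : q1.natDegree ≤ t + 1 := by
      apply le_trans (Polynomial.natDegree_sub_le _ _)
      simp only [max_le_iff]
      refine ⟨by omega, ?_⟩
      apply le_trans (Polynomial.natDegree_mul_le)
      apply le_trans (add_le_add (Polynomial.natDegree_C _).le (Polynomial.natDegree_mul_le))
      have := Polynomial.natDegree_X_le (R := ℝ)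
      omega
    have hq10 : q1.eval 0 = 1 := by simp [hq1, hq0]
    have hMe : M *ᵥ (s.x 0 - s.xs) = -z := by rw [hz, s.Pr0_eq, hM, neg_neg]
    have hXu : (aeval M (X * u)) *ᵥ (s.x 0 - s.xs) = -(aeval M u *ᵥ z) := by
      rw [mul_comm X u, _root_.map_mul, Polynomial.aeval_X, ← Matrix.mulVec_mulVec, hMe,
        Matrix.mulVec_neg]
    have hq1x : s.x (t + 1) - s.xs = (aeval M q1) *ᵥ (s.x 0 - s.xs) := by
      rw [s.hxrec t,
        show s.x t + s.al t • s.p t - s.xs = (s.x t - s.xs) + s.al t • s.p t by abel,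
        hqx, hup, hq1, ← Polynomial.smul_eq_C_mul, map_sub, _root_.map_smul, Matrix.sub_mulVec,
        Matrix.smul_mulVec, hXu, smul_neg, sub_neg_eq_add]
    refine ⟨q1, q1 + C (s.dt (t + 1) / s.dt t) * u, hq1d, ?_, hq10, hq1x, ?_⟩
    · apply le_trans (Polynomial.natDegree_add_le _ _)
      simp only [max_le_iff]
      refine ⟨hq1d, ?_⟩
      apply le_trans (Polynomial.natDegree_mul_le)
      have := Polynomial.natDegree_C (s.dt (t + 1) / s.dt t)
      omega
    · rw [s.hprec t, s.Pr_eq_M (t + 1) q1 hq1x, _root_.map_add, Matrix.add_mulVec]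
      congr 1
      rw [hup, ← Polynomial.smul_eq_C_mul, _root_.map_smul, Matrix.smul_mulVec]

/-- Optimality of `x t` over `x t + K t`. -/
lemma energy_le {t : ℕ} (ht : t ≤ s.T) (w : Fin d → ℝ) (hw : w ∈ s.K t) :
    (s.x t - s.xs) ⬝ᵥ (s.H *ᵥ (s.x t - s.xs))
      ≤ (s.x t + w - s.xs) ⬝ᵥ (s.H *ᵥ (s.x t + w - s.xs)) := by
  have hexp : (s.x t + w - s.xs) = (s.x t - s.xs) + w := by abel
  set e := s.x t - s.xs with he
  have hsym := s.hHsym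
  have h1 : e ⬝ᵥ (s.H *ᵥ w) = w ⬝ᵥ (s.H *ᵥ e) := by
    rw [dot_symm s.H hsym e w, dotProduct_comm]
  have h2 : w ⬝ᵥ (s.H *ᵥ e) = 0 := by
    have : s.H *ᵥ e = -(s.r t) := by rw [s.hr t, ← Matrix.mulVec_neg]; congr 1; rw [he]; abel
    rw [this, dotProduct_neg, dotProduct_comm, s.r_orth_K ht w hw, neg_zero]
  have h3 : 0 ≤ w ⬝ᵥ (s.H *ᵥ w) := by
    have := s.hHpsd.re_dotProduct_nonneg w
    simpa using this
  rw [hexp, add_dotProduct, Matrix.mulVec_add, dotProduct_add,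
    dotProduct_add, h1, h2]
  linarith

/-- Part (i): directions lie in `P · span(residuals)`. -/
lemma p_mem_map (N : Submodule ℝ (Fin d → ℝ)) :
    ∀ t, (∀ j ≤ t, s.r j ∈ N) → s.p t ∈ N.map (Matrix.mulVecLin s.P) := by
  intro t
  induction t with
  | zero =>
    intro h
    rw [s.hp0]
    exact ⟨s.r 0, h 0 (le_refl 0), by rw [Matrix.mulVecLin_apply]⟩
  | succ t ih =>
    intro h
    rw [s.hprec t]
    refine Submodule.add_mem _ ⟨s.r (t + 1), h (t + 1) (le_refl _), by rw [Matrix.mulVecLin_apply]⟩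
      (Submodule.smul_mem _ _ (ih fun j hj => h j (le_trans hj (Nat.le_succ t))))

lemma x_sub_mem_map (N : Submodule ℝ (Fin d → ℝ)) :
    ∀ t, (∀ j < t, s.r j ∈ N) → s.x t - s.x 0 ∈ N.map (Matrix.mulVecLin s.P) := by
  intro t
  induction t with
  | zero => intro _; simp
  | succ t ih =>
    intro h
    rw [s.hxrec t, show s.x t + s.al t • s.p t - s.x 0 = (s.x t - s.x 0) + s.al t • s.p t by abel]
    exact Submodule.add_mem _ (ih fun j hj => h j (by omega))
      (Submodule.smul_mem _ _ (s.p_mem_map N t fun j hj => h j (by omega)))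

end CGData
end CGaux

namespace CGaux
variable {d : ℕ}

lemma sum_dotProduct' {ι : Type*} (F : Finset ι) (f : ι → (Fin d → ℝ)) (u : Fin d → ℝ) :
    (∑ i ∈ F, f i) ⬝ᵥ u = ∑ i ∈ F, f i ⬝ᵥ u := by
  simp only [dotProduct, Finset.sum_apply, Finset.sum_mul]
  exact Finset.sum_comm

lemma dot_sum_sum (a c : Fin d → ℝ) (v : Fin d → Fin d → ℝ)
    (hortho : ∀ i j, v i ⬝ᵥ v j = if i = j then (1 : ℝ) else 0) :
    (∑ i, a i • v i) ⬝ᵥ (∑ j, c j • v j) = ∑ i, a i * c i := by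
  rw [sum_dotProduct']
  apply Finset.sum_congr rfl
  intro i _
  rw [smul_dotProduct]
  have hvc : v i ⬝ᵥ (∑ j, c j • v j) = c i := by
    rw [dotProduct_comm, sum_dotProduct']
    rw [Finset.sum_eq_single i]
    · rw [smul_dotProduct, hortho i i, if_pos rfl, smul_eq_mul, mul_one]
    · intro j _ hij
      rw [smul_dotProduct, hortho j i, if_neg hij, smul_zero]
    · intro hh; exact absurd (Finset.mem_univ i) hh
  rw [hvc, smul_eq_mul]

lemma posDef_smul {M : Matrix (Fin d) (Fin d) ℝ} (h : M.PosDef) {c : ℝ} (hc : 0 < c) :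
    (c • M).PosDef := by
  constructor
  · have h1 := h.isHermitian
    rw [Matrix.IsHermitian] at h1 ⊢
    rw [Matrix.conjTranspose_smul, h1]
    norm_num
  · intro x hx
    exact (Matrix.PosDef.smul h hc).2 hx

lemma sum_vmv_mul (c e : Fin d → ℝ) (v : Fin d → Fin d → ℝ)
    (hortho : ∀ i j, v i ⬝ᵥ v j = if i = j then (1 : ℝ) else 0) :
    (∑ i, c i • vecMulVec (v i) (v i)) * (∑ i, e i • vecMulVec (v i) (v i))
      = ∑ i, (c i * e i) • vecMulVec (v i) (v i) := by
  rw [Finset.sum_mul_sum]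
  apply Finset.sum_congr rfl; intro i _
  rw [Finset.sum_eq_single i]
  · rw [smul_mul_assoc, mul_smul_comm, vmv_mul_vmv, hortho i i, if_pos rfl, one_smul, smul_smul]
  · intro j _ hij
    rw [smul_mul_assoc, mul_smul_comm, vmv_mul_vmv, hortho i j, if_neg (Ne.symm hij), zero_smul,
      smul_zero, smul_zero]
  · intro hh; exact absurd (Finset.mem_univ i) hh

end CGaux

/-- PCG is a preconditioned first-order method and is optimal:
`x_t - x_0 ∈ H_S⁻¹·span{∇f(x_0),…,∇f(x_{t-1})}` and
`δ_{x_t} = (1/2)·min_{Q, deg Q ≤ t, Q(0)=1} Σ_i Q(1/λ_i)² ξ_i²`. -/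
theorem stmt6 {n d m : ℕ} (hd : 1 ≤ d) (hdn : d ≤ n)
    (A : Matrix (Fin n) (Fin d) ℝ) (b : Fin d → ℝ)
    (Λ : Matrix (Fin d) (Fin d) ℝ) (hΛdiag : Λ.IsDiag)
    (hΛ : (Λ - 1).PosSemidef) (ν : ℝ) (hν : 0 < ν)
    (S : Matrix (Fin m) (Fin n) ℝ)
    -- eigenvalue decomposition `C_S = Σ_i λ_i v_i v_iᵀ`
    (lam : Fin d → ℝ) (v : Fin d → Fin d → ℝ)
    (hortho : ∀ i j, v i ⬝ᵥ v j = if i = j then (1 : ℝ) else 0)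
    (hpos : ∀ i, 0 < lam i)
    (hdecomp : CSmat A ν Λ S = ∑ i, lam i • Matrix.vecMulVec (v i) (v i))
    -- the PCG iteration
    (x r rt p : ℕ → Fin d → ℝ) (dt al : ℕ → ℝ)
    (hr0 : r 0 = b - (Hmat A ν Λ).mulVec (x 0))
    (hrt : ∀ t, rt t = (HSmat A ν Λ S)⁻¹.mulVec (r t))
    (hp0 : p 0 = rt 0)
    (hdt : ∀ t, dt t = r t ⬝ᵥ rt t)
    (hal : ∀ t, al t = dt t / (p t ⬝ᵥ (Hmat A ν Λ).mulVec (p t)))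
    (hxrec : ∀ t, x (t + 1) = x t + al t • p t)
    (hrrec : ∀ t, r (t + 1) = r t - al t • (Hmat A ν Λ).mulVec (p t))
    (hprec : ∀ t, p (t + 1) = rt (t + 1) + (dt (t + 1) / dt t) • p t)
    -- well-definedness up to time `T`
    (T : ℕ) (hT : 1 ≤ T)
    (hwell : ∀ s < T, dt s ≠ 0 ∧ p s ⬝ᵥ (Hmat A ν Λ).mulVec (p s) ≠ 0) :
    ∀ t ≤ T,
      (x t - x 0 ∈
        Submodule.map (Matrix.mulVecLin (HSmat A ν Λ S)⁻¹)
          (Submodule.span ℝ {g | ∃ s < t, g = gradf A ν Λ b (x s)})) ∧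
      deltaEx A ν Λ b (x t) =
        sInf {y : ℝ | ∃ Q : Polynomial ℝ, Q.natDegree ≤ t ∧ Q.eval 0 = 1 ∧
          y = (1 / 2) * ∑ i, (Q.eval (lam i)⁻¹) ^ 2 *
            (v i ⬝ᵥ (msqrt (Hmat A ν Λ)).mulVec (x 0 - xstar A ν Λ b)) ^ 2} := by
  -- basic positivity and symmetry facts
  set H := Hmat A ν Λ with hH
  set HS := HSmat A ν Λ S with hHS
  have hΛsym : Λᵀ = Λ := by
    have h1 : (Λ - 1)ᵀ = Λ - 1 := by
      rw [← Matrix.conjTranspose_eq_transpose_of_trivial]; exact hΛ.isHermitian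
    have h2 : Λ = (Λ - 1) + 1 := by abel
    rw [h2, Matrix.transpose_add, h1, Matrix.transpose_one]
  have hΛpd : Λ.PosDef := by
    have h2 : Λ = 1 + (Λ - 1) := by abel
    rw [h2]; exact Matrix.PosDef.add_posSemidef Matrix.PosDef.one hΛ
  have hνΛ : (ν ^ 2 • Λ).PosDef := CGaux.posDef_smul hΛpd (by positivity)
  have hAA : (Aᵀ * A).PosSemidef := by
    have h := Matrix.posSemidef_conjTranspose_mul_self A
    rwa [Matrix.conjTranspose_eq_transpose_of_trivial] at h
  have hHpd : H.PosDef := by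
    rw [hH]; unfold Hmat
    exact Matrix.PosDef.posSemidef_add hAA hνΛ
  have hHsym : Hᵀ = H := by
    rw [← Matrix.conjTranspose_eq_transpose_of_trivial]; exact hHpd.isHermitian
  have hSA : (Aᵀ * Sᵀ * S * A).PosSemidef := by
    have h := Matrix.posSemidef_conjTranspose_mul_self (S * A)
    rwa [Matrix.conjTranspose_eq_transpose_of_trivial, Matrix.transpose_mul,
      ← Matrix.mul_assoc] at h
  have hHSpd : HS.PosDef := by
    rw [hHS]; unfold HSmat
    exact Matrix.PosDef.posSemidef_add hSA hνΛ
  have hHSsym : HSᵀ = HS := by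
    rw [← Matrix.conjTranspose_eq_transpose_of_trivial]; exact hHSpd.isHermitian
  have hHdet : IsUnit H.det := (Matrix.isUnit_iff_isUnit_det H).mp hHpd.isUnit
  have hHSdet : IsUnit HS.det := (Matrix.isUnit_iff_isUnit_det HS).mp hHSpd.isUnit
  set P := HS⁻¹ with hP
  have hPpd : P.PosDef := hHSpd.inv
  have hPsym : Pᵀ = P := by rw [hP, Matrix.transpose_nonsing_inv, hHSsym]
  set xs := xstar A ν Λ b with hxs
  have hHxs : H *ᵥ xs = b := by
    rw [hxs]; unfold xstar
    rw [Matrix.mulVec_mulVec, ← hH, Matrix.mul_nonsing_inv _ hHdet, Matrix.one_mulVec]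
  have hrH : ∀ t, r t = H *ᵥ (xs - x t) := by
    intro t
    induction t with
    | zero => rw [hr0, Matrix.mulVec_sub, hHxs]
    | succ t ih =>
      rw [hrrec, ih, hxrec, Matrix.mulVec_sub, Matrix.mulVec_sub, Matrix.mulVec_add,
        Matrix.mulVec_smul]
      abel
  -- the CG data bundle
  set cg : CGaux.CGData d :=
    { H := H, P := P, hHsym := hHsym, hHpsd := hHpd.posSemidef, hPsym := hPsym,
      x := x, r := r, p := p, dt := dt, al := al, xs := xs,
      hr := hrH, hdt := fun t => by rw [hdt t, hrt t],
      hal := hal, hp0 := by rw [hp0, hrt 0],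
      hprec := fun t => by rw [hprec t, hrt (t + 1)], hxrec := hxrec,
      T := T, hwell := hwell } with hcg
  -- spectral setup
  have hHpsd : H.PosSemidef := hHpd.posSemidef
  set R := msqrt H with hR
  have hRdef : R = (hHpsd.1.eigenvectorUnitary : Matrix (Fin d) (Fin d) ℝ) *
      diagonal (fun i => Real.sqrt (hHpsd.1.eigenvalues i)) *
      (star hHpsd.1.eigenvectorUnitary : Matrix (Fin d) (Fin d) ℝ) := by
    rw [hR]; unfold msqrt; rw [dif_pos hHpsd]; rfl
  have hRpsd : R.PosSemidef := by
    rw [hRdef]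
    have := (Matrix.PosSemidef.diagonal (d := fun i => Real.sqrt (hHpsd.1.eigenvalues i))
      (fun i => Real.sqrt_nonneg _)).mul_mul_conjTranspose_same
      (hHpsd.1.eigenvectorUnitary : Matrix (Fin d) (Fin d) ℝ)
    simpa [Unitary.coe_star, Matrix.star_eq_conjTranspose] using this
  have hRR : R * R = H := by
    rw [hRdef]
    conv_rhs => rw [hHpsd.1.spectral_theorem, Unitary.conjStarAlgAut_apply]
    calc _ = (hHpsd.1.eigenvectorUnitary : Matrix (Fin d) (Fin d) ℝ) *
          (diagonal (fun i => Real.sqrt (hHpsd.1.eigenvalues i)) *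
            ((star hHpsd.1.eigenvectorUnitary : Matrix (Fin d) (Fin d) ℝ) *
              hHpsd.1.eigenvectorUnitary) *
            diagonal (fun i => Real.sqrt (hHpsd.1.eigenvalues i))) *
          (star hHpsd.1.eigenvectorUnitary : Matrix (Fin d) (Fin d) ℝ) := by
          simp only [Matrix.mul_assoc]
      _ = _ := by
          rw [Unitary.coe_star_mul_self, Matrix.mul_one, Matrix.diagonal_mul_diagonal]
          congr 3
          funext i
          simp [Real.mul_self_sqrt (hHpsd.eigenvalues_nonneg i)]
  have hRsym : Rᵀ = R := by
    rw [← Matrix.conjTranspose_eq_transpose_of_trivial]; exact hRpsd.isHermitian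
  have hRdet : IsUnit R.det := by
    rw [isUnit_iff_ne_zero]
    intro h0
    have : H.det = 0 := by rw [← hRR, Matrix.det_mul, h0, zero_mul]
    exact hHpd.det_pos.ne' this
  have hRinvR : R⁻¹ * R = 1 := Matrix.nonsing_inv_mul _ hRdet
  have hHSP : HS * P = 1 := Matrix.mul_nonsing_inv _ hHSdet
  set Cinv := R * P * R with hCinv
  set CS := CSmat A ν Λ S with hCS
  have hCSdef : CS = R⁻¹ * HS * R⁻¹ := rfl
  have hCSC : CS * Cinv = 1 := by
    rw [hCSdef, hCinv]
    calc R⁻¹ * HS * R⁻¹ * (R * P * R)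
        = R⁻¹ * (HS * (R⁻¹ * R * (P * R))) := by simp only [Matrix.mul_assoc]
      _ = R⁻¹ * (HS * P * R) := by rw [hRinvR, Matrix.one_mul, Matrix.mul_assoc]
      _ = R⁻¹ * R := by rw [hHSP, Matrix.one_mul]
      _ = 1 := hRinvR
  have hCinv_eq : Cinv = ∑ i, (lam i)⁻¹ • Matrix.vecMulVec (v i) (v i) := by
    have h1 : CS⁻¹ = Cinv := Matrix.inv_eq_right_inv hCSC
    have h2 : CS * (∑ i, (lam i)⁻¹ • Matrix.vecMulVec (v i) (v i)) = 1 := by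
      rw [hdecomp, CGaux.sum_vmv_mul lam (fun i => (lam i)⁻¹) v hortho]
      have h3 : ∀ i : Fin d, (lam i * (lam i)⁻¹) • Matrix.vecMulVec (v i) (v i)
          = Matrix.vecMulVec (v i) (v i) := by
        intro i; rw [mul_inv_cancel₀ (ne_of_gt (hpos i)), one_smul]
      simp_rw [h3]
      exact CGaux.sum_vmv_eq_one v hortho
    rw [← h1, Matrix.inv_eq_right_inv h2]
  set M := P * H with hM
  have hRM : R * M = Cinv * R := by
    rw [hM, hCinv, ← hRR]
    simp only [Matrix.mul_assoc]
  have hcomm : ∀ k : ℕ, R * M ^ k = Cinv ^ k * R := by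
    intro k
    induction k with
    | zero => simp
    | succ k ih =>
      rw [pow_succ, ← Matrix.mul_assoc, ih, Matrix.mul_assoc, hRM, ← Matrix.mul_assoc,
        ← pow_succ]
  have haevalR : ∀ Q : Polynomial ℝ, R * Polynomial.aeval M Q = Polynomial.aeval Cinv Q * R := by
    intro Q
    rw [Polynomial.aeval_eq_sum_range, Polynomial.aeval_eq_sum_range, Finset.mul_sum,
      Finset.sum_mul]
    exact Finset.sum_congr rfl fun k _ => by rw [mul_smul_comm, smul_mul_assoc, hcomm k]
  set e0 := x 0 - xs with he0
  set z0 := R *ᵥ e0 with hz0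
  -- the energy identity
  have hEnergy : ∀ Q : Polynomial ℝ, ∀ y : Fin d → ℝ, y - xs = Polynomial.aeval M Q *ᵥ e0 →
      (y - xs) ⬝ᵥ (H *ᵥ (y - xs))
        = ∑ i, (Q.eval (lam i)⁻¹) ^ 2 * (v i ⬝ᵥ z0) ^ 2 := by
    intro Q y hy
    have hRu : R *ᵥ (y - xs) = ∑ i, (Q.eval (lam i)⁻¹ * (v i ⬝ᵥ z0)) • v i := by
      rw [hy, Matrix.mulVec_mulVec, haevalR, ← Matrix.mulVec_mulVec, ← hz0, hCinv_eq,
        CGaux.aeval_sum_vmv, CGaux.sum_mulVec]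
      · apply Finset.sum_congr rfl
        intro i _
        rw [Matrix.smul_mulVec, CGaux.vmv_mulVec, smul_smul]
      · exact hortho
    have hq : (y - xs) ⬝ᵥ (H *ᵥ (y - xs)) = (R *ᵥ (y - xs)) ⬝ᵥ (R *ᵥ (y - xs)) := by
      rw [← hRR, ← Matrix.mulVec_mulVec, CGaux.dot_symm R hRsym]
    rw [hq, hRu, CGaux.dot_sum_sum _ _ v hortho]
    apply Finset.sum_congr rfl
    intro i _
    ring
  intro t htT
  constructor
  · -- part (i)
    have key := cg.x_sub_mem_map (Submodule.span ℝ {g | ∃ s < t, g = gradf A ν Λ b (x s)}) t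
    apply key
    intro j hj
    show r j ∈ Submodule.span ℝ {g | ∃ s < t, g = gradf A ν Λ b (x s)}
    have hrj : r j = -(gradf A ν Λ b (x j)) := by
      unfold gradf
      rw [hrH j, Matrix.mulVec_sub, hHxs, neg_sub, ← hH]
    rw [hrj]
    exact Submodule.neg_mem _ (Submodule.subset_span ⟨j, hj, rfl⟩)
  · -- part (ii)
    obtain ⟨q, u, hqd, hud, hq0, hqx0, hup0⟩ := cg.rep t
    have hqx : x t - xs = Polynomial.aeval M q *ᵥ e0 := hqx0
    have hdx : deltaEx A ν Λ b (x t)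
        = (1 / 2) * ((x t - xs) ⬝ᵥ (H *ᵥ (x t - xs))) := rfl
    have hmem : deltaEx A ν Λ b (x t)
        ∈ {y : ℝ | ∃ Q : Polynomial ℝ, Q.natDegree ≤ t ∧ Q.eval 0 = 1 ∧
            y = (1 / 2) * ∑ i, (Q.eval (lam i)⁻¹) ^ 2 * (v i ⬝ᵥ z0) ^ 2} := by
      exact ⟨q, hqd, hq0, by rw [hdx, hEnergy q (x t) hqx]⟩
    have hlb : ∀ y' ∈ {y : ℝ | ∃ Q : Polynomial ℝ, Q.natDegree ≤ t ∧ Q.eval 0 = 1 ∧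
            y = (1 / 2) * ∑ i, (Q.eval (lam i)⁻¹) ^ 2 * (v i ⬝ᵥ z0) ^ 2},
        deltaEx A ν Λ b (x t) ≤ y' := by
      rintro y' ⟨Q, hQd, hQ0, rfl⟩
      set y : Fin d → ℝ := xs + Polynomial.aeval M Q *ᵥ e0 with hy
      have hyx : y - xs = Polynomial.aeval M Q *ᵥ e0 := by rw [hy]; abel
      have hE := hEnergy Q y hyx
      have hwmem : y - x t ∈ cg.K t := by
        have hyd : y - x t = Polynomial.aeval M (Q - q) *ᵥ e0 := by
          rw [show y - x t = (y - xs) - (x t - xs) by abel, hyx, hqx, map_sub,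
            Matrix.sub_mulVec]
        by_cases hQq : Q - q = 0
        · rw [hyd, hQq, map_zero, Matrix.zero_mulVec]
          exact Submodule.zero_mem _
        · have hdvd : Polynomial.X ∣ (Q - q) := by
            rw [Polynomial.X_dvd_iff, Polynomial.coeff_zero_eq_eval_zero,
              Polynomial.eval_sub, hQ0, hq0, sub_self]
          obtain ⟨g, hg⟩ := hdvd
          have hgne : g ≠ 0 := by rintro rfl; rw [mul_zero] at hg; exact hQq hg
          have hdeg : (Q - q).natDegree ≤ t :=
            le_trans (Polynomial.natDegree_sub_le _ _) (max_le hQd hqd)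
          have hgdeg : g.natDegree < t := by
            have hnd := Polynomial.natDegree_mul (Polynomial.X_ne_zero (R := ℝ)) hgne
            rw [hg, hnd, Polynomial.natDegree_X] at hdeg
            omega
          have hMe : M *ᵥ e0 = -(P *ᵥ r 0) := by
            rw [show P *ᵥ r 0 = -(M *ᵥ e0) from cg.Pr0_eq, neg_neg]
          have hXg : Polynomial.aeval M (Polynomial.X * g) *ᵥ e0
              = -(Polynomial.aeval M g *ᵥ (P *ᵥ r 0)) := by
            rw [mul_comm Polynomial.X g, _root_.map_mul, Polynomial.aeval_X,
              ← Matrix.mulVec_mulVec, hMe, Matrix.mulVec_neg]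
          rw [hyd, hg, hXg]
          exact Submodule.neg_mem _ (cg.poly_mem_K htT g hgdeg)
      have hle := cg.energy_le htT (y - x t) hwmem
      have hyy : x t + (y - x t) = y := by abel
      rw [hyy] at hle
      rw [hdx, ← hE]
      linarith
    exact le_antisymm (le_csInf ⟨_, hmem⟩ hlb) (csInf_le ⟨_, hlb⟩ hmem)
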